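/- Let a be a positive integer with a ≡ 3 (mod 4). Then, in ℂ, Σ over odd n with 1 ≤ n ≤ 2a−1 of (a/n)·exp(πi·n/(2a)) equals −i · Σ_{m=1}^{a−1} (m/a)·exp(2πi·m/a), where (·/·) denotes the Jacobi symbol. (In particular, for a prime p ≡ 3 (mod 4) the left-hand side equals −i·G_p = √p.) -/

import Mathlib

open Finset Complex

private lemma exp_pi_I_half_nat (n : ℕ) :
    Complex.exp (Real.pi * I * n / 2) = I ^ n := by
  rw [show (Real.pi : ℂ) * I * n / 2 = n * (Real.pi / 2 * I) by ring, Complex.exp_nat_mul]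
  norm_num [Complex.exp_mul_I]

/-- For a positive integer `a ≡ 3 (mod 4)`,
`Σ_{n odd, 1 ≤ n ≤ 2a−1} (a/n)·exp(πi·n/(2a)) = −i · Σ_{m=1}^{a−1} (m/a)·exp(2πi·m/a)`
in `ℂ`, where `(·/·)` denotes the Jacobi symbol. -/
theorem fbar_eq_neg_i_gauss (a : ℕ) (ha : 0 < a) (ha3 : a % 4 = 3) :
    ∑ n ∈ (Finset.Icc 1 (2 * a - 1)).filter (fun n => Odd n),
        (jacobiSym (a : ℤ) n : ℂ) * Complex.exp (Real.pi * Complex.I * n / (2 * a))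
      = -Complex.I * ∑ m ∈ Finset.Icc 1 (a - 1),
          (jacobiSym (m : ℤ) a : ℂ) * Complex.exp (2 * Real.pi * Complex.I * m / a) := by
  obtain ⟨c, hc4⟩ : ∃ c, 4 * c = a + 1 := ⟨(a + 1) / 4, by omega⟩
  have ha1 : 1 < a := by omega
  have ha0 : 0 < a := ha
  have hao : Odd a := by rw [Nat.odd_iff]; omega
  have haC : (a : ℂ) ≠ 0 := Nat.cast_ne_zero.mpr (by omega)
  have hcop : Nat.Coprime c a := by
    have h1 : Nat.gcd c a ∣ 4 * c - a := Nat.dvd_sub (Dvd.dvd.mul_left (Nat.gcd_dvd_left c a) 4)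
      (Nat.gcd_dvd_right c a)
    have h2 : 4 * c - a = 1 := by omega
    rw [h2] at h1
    exact Nat.eq_one_of_dvd_one h1
  have hcop2 : Nat.Coprime 2 a := by
    have h1 : Nat.gcd 2 a ∣ 2 := Nat.gcd_dvd_left 2 a
    have h2 : Nat.gcd 2 a ∣ a := Nat.gcd_dvd_right 2 a
    rcases (Nat.dvd_prime Nat.prime_two).mp h1 with h | h
    · exact h
    · exfalso; rw [h] at h2; omega
  have hcop4 : Nat.Coprime 4 a := by
    have h : (4 : ℕ) = 2 ^ 2 := by norm_num
    rw [h]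
    exact Nat.Coprime.pow_left 2 hcop2
  have hgcd2 : Int.gcd (2 : ℤ) (a : ℕ) = 1 := by simpa [Int.gcd] using hcop2
  -- J(4 | a) = 1
  have hJ4 : jacobiSym (4 : ℤ) a = 1 := by
    have h : ((4:ℤ)) = 2 * 2 := by norm_num
    rw [h, jacobiSym.mul_left, ← sq]
    exact jacobiSym.sq_one hgcd2
  -- J(c | a) = 1
  have hJc : jacobiSym (c : ℤ) a = 1 := by
    have h1 : jacobiSym ((4 * c : ℕ) : ℤ) a = jacobiSym (4:ℤ) a * jacobiSym (c:ℤ) a := by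
      push_cast
      exact jacobiSym.mul_left 4 c a
    have h2 : jacobiSym ((4 * c : ℕ) : ℤ) a = 1 := by
      rw [hc4]
      have h3 : (((a + 1 : ℕ) : ℤ)) % (a : ℤ) = (1 : ℤ) % (a : ℤ) := by
        push_cast
        rw [show ((a:ℤ) + 1) = 1 + (a:ℤ) * 1 by ring, Int.add_mul_emod_self_left]
      rw [jacobiSym.mod_left' h3, jacobiSym.one_left]
    rw [h2, hJ4, one_mul] at h1
    exact h1.symm
  -- basic modular identity
  have hme : ∀ n : ℕ, (4 * n) * c ≡ n [MOD a] := by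
    intro n
    have h1 : 4 * n * c = n + n * a := by
      have : 4 * n * c = n * (4 * c) := by ring
      rw [this, hc4]; ring
    rw [h1]
    show (n + n * a) % a = n % a
    exact Nat.add_mul_mod_self_right n n a
  -- the key exponential identity
  have hexp : ∀ n : ℕ, Odd n →
      ((-1 : ℂ) ^ (n / 2)) * Complex.exp (Real.pi * I * n / (2 * a))
        = -I * Complex.exp (2 * Real.pi * I * (n * c : ℕ) / a) := by
    intro n hn
    obtain ⟨k, rfl⟩ := hn
    have hk2 : (2 * k + 1) / 2 = k := by omega
    have hc4C : (4 : ℂ) * c = a + 1 := by exact_mod_cast congrArg (Nat.cast : ℕ → ℂ) hc4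
    have harg : (2 : ℂ) * Real.pi * I * ((2 * k + 1) * c : ℕ) / a
        = Real.pi * I * (2 * k + 1 : ℕ) / (2 * a) + Real.pi * I * (2 * k + 1 : ℕ) / 2 := by
      push_cast
      push_cast at hc4C
      calc (2 : ℂ) * Real.pi * I * ((2 * k + 1) * c) / a
          = Real.pi * I * (2 * k + 1) * (4 * c) / (2 * a) := by
            field_simp
            ring
        _ = Real.pi * I * (2 * k + 1) * (a + 1) / (2 * a) := by rw [hc4C]
        _ = Real.pi * I * (2 * k + 1) / (2 * a) + Real.pi * I * (2 * k + 1) / 2 := by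
            field_simp
            ring
    rw [harg, Complex.exp_add, exp_pi_I_half_nat]
    have hIpow : I ^ (2 * k + 1) = (-1 : ℂ) ^ k * I := by
      rw [pow_succ, pow_mul, Complex.I_sq]
    rw [hIpow, hk2]
    have hII : -I * I = 1 := by rw [neg_mul, Complex.I_mul_I]; norm_num
    calc ((-1 : ℂ) ^ k) * Complex.exp (Real.pi * I * (2 * k + 1 : ℕ) / (2 * a))
        = (-I * I) * (((-1 : ℂ) ^ k) * Complex.exp (Real.pi * I * (2 * k + 1 : ℕ) / (2 * a))) := by
          rw [hII, one_mul]
      _ = -I * (Complex.exp (Real.pi * I * (2 * k + 1 : ℕ) / (2 * a)) * ((-1 : ℂ) ^ k * I)) := by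
          ring
  -- reduce modulo a in the exponential
  have hkey : ∀ q r : ℕ, Complex.exp (2 * Real.pi * I * ((a * q + r : ℕ)) / a)
      = Complex.exp (2 * Real.pi * I * (r : ℕ) / a) := by
    intro q r
    push_cast
    rw [show (2 : ℂ) * Real.pi * I * (a * q + r) / a
        = (q : ℂ) * (2 * Real.pi * I) + 2 * Real.pi * I * r / a by field_simp,
      Complex.exp_add]
    rw [show ((q : ℂ)) * (2 * Real.pi * I) = (q : ℕ) * (2 * (Real.pi : ℂ) * I) by push_cast; ring]
    rw [Complex.exp_nat_mul_two_pi_mul_I, one_mul]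
  have hexpmod : ∀ m : ℕ, Complex.exp (2 * Real.pi * I * ((m % a : ℕ)) / a)
      = Complex.exp (2 * Real.pi * I * (m : ℕ) / a) := by
    intro m
    conv_rhs => rw [← Nat.div_add_mod m a]
    exact (hkey (m / a) (m % a)).symm
  -- reciprocity
  have hrecip : ∀ n : ℕ, Odd n →
      jacobiSym (a : ℤ) n = (-1 : ℤ) ^ (n / 2) * jacobiSym (n : ℤ) a := by
    intro n hn
    rw [jacobiSym.quadratic_reciprocity hao hn, pow_mul]
    congr 2
    have h : Odd (a / 2) := by rw [Nat.odd_iff]; omega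
    exact Odd.neg_one_pow h
  -- jacobi symbol of the reduced residue
  have hJmod : ∀ n : ℕ, jacobiSym (((n * c) % a : ℕ) : ℤ) a = jacobiSym (n : ℤ) a := by
    intro n
    have h1 : ((((n * c) % a : ℕ)) : ℤ) % (a : ℤ) = (((n * c : ℕ)) : ℤ) % (a : ℤ) := by
      push_cast
      simp [Int.emod_emod_of_dvd]
    rw [jacobiSym.mod_left' h1]
    push_cast
    rw [jacobiSym.mul_left, hJc, mul_one]
  -- now the sum manipulation
  rw [Finset.mul_sum]
  rw [← Finset.sum_erase ((Finset.Icc 1 (2 * a - 1)).filter (fun n => Odd n))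
    (f := fun n => (jacobiSym (a : ℤ) n : ℂ) * Complex.exp (Real.pi * Complex.I * n / (2 * a)))
    (a := a) (by
      have hz : jacobiSym (a : ℤ) a = 0 := by
        rw [jacobiSym.eq_zero_iff]
        refine ⟨by omega, ?_⟩
        rw [Int.gcd_natCast_natCast, Nat.gcd_self]
        omega
      simp [hz])]
  refine Finset.sum_nbij' (fun n => (n * c) % a)
    (fun m => if (4 * m) % a % 2 = 1 then (4 * m) % a else (4 * m) % a + a) ?_ ?_ ?_ ?_ ?_
  · -- maps into Icc 1 (a-1)
    intro n hn
    simp only [Finset.mem_erase, Finset.mem_filter, Finset.mem_Icc] at hn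
    obtain ⟨hna, ⟨hn1, hn2⟩, hodd⟩ := hn
    have hlt : (n * c) % a < a := Nat.mod_lt _ (by omega)
    have hne : (n * c) % a ≠ 0 := by
      intro h0
      have hdvd : a ∣ n * c := Nat.dvd_of_mod_eq_zero h0
      have hdn : a ∣ n := Nat.Coprime.dvd_of_dvd_mul_right (Nat.Coprime.symm hcop) hdvd
      have hle : a ≤ n := Nat.le_of_dvd (by omega) hdn
      have hd2 : a ∣ n - a := Nat.dvd_sub hdn dvd_rfl
      rcases Nat.eq_zero_or_pos (n - a) with h | h
      · omega
      · have := Nat.le_of_dvd h hd2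
        omega
    simp only [Finset.mem_Icc]
    omega
  · -- inverse maps into the filtered set minus a
    intro m hm
    simp only [Finset.mem_Icc] at hm
    have hlt : (4 * m) % a < a := Nat.mod_lt _ (by omega)
    have hne : (4 * m) % a ≠ 0 := by
      intro h0
      have hdvd : a ∣ 4 * m := Nat.dvd_of_mod_eq_zero h0
      have hdm : a ∣ m := Nat.Coprime.dvd_of_dvd_mul_left (Nat.Coprime.symm hcop4) hdvd
      have := Nat.le_of_dvd (by omega) hdm
      omega
    simp only [Finset.mem_erase, Finset.mem_filter, Finset.mem_Icc, Nat.odd_iff]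
    split <;> omega
  · -- left inverse
    intro n hn
    simp only [Finset.mem_erase, Finset.mem_filter, Finset.mem_Icc, Nat.odd_iff] at hn
    obtain ⟨hna, ⟨hn1, hn2⟩, hodd⟩ := hn
    have key : (4 * ((n * c) % a)) % a = n % a := by
      have h1 : 4 * ((n * c) % a) ≡ 4 * (n * c) [MOD a] :=
        Nat.ModEq.mul_left 4 (Nat.mod_modEq (n * c) a)
      have h2 : 4 * (n * c) = (4 * n) * c := by ring
      have h3 : 4 * ((n * c) % a) ≡ n [MOD a] := h1.trans (h2 ▸ hme n)
      exact h3
    rcases Nat.lt_or_ge n a with hlt | hge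
    · have hmod : n % a = n := Nat.mod_eq_of_lt hlt
      rw [key, hmod]
      simp only [hodd, if_pos]
    · have hmod : n % a = n - a := by
        rw [Nat.mod_eq_sub_mod hge, Nat.mod_eq_of_lt (by omega)]
      rw [key, hmod]
      have hpar : (n - a) % 2 = 0 := by omega
      split <;> omega
  · -- right inverse
    intro m hm
    simp only [Finset.mem_Icc] at hm
    have hmlt : m < a := by omega
    have hbase : ((4 * m) % a * c) % a = m := by
      have h1 : (4 * m) % a * c ≡ (4 * m) * c [MOD a] :=
        Nat.ModEq.mul_right c (Nat.mod_modEq (4 * m) a)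
      have h2 : (4 * m) % a * c ≡ m [MOD a] := h1.trans (hme m)
      have h3 : ((4 * m) % a * c) % a = m % a := h2
      rw [h3, Nat.mod_eq_of_lt hmlt]
    split
    · exact hbase
    · have h1 : ((4 * m) % a + a) * c = (4 * m) % a * c + a * c := by ring
      rw [h1]
      have h2 : ((4 * m) % a * c + a * c) % a = ((4 * m) % a * c) % a :=
        Nat.add_mul_mod_self_left ((4 * m) % a * c) a c
      rw [h2]
      exact hbase
  · -- term equality
    intro n hn
    simp only [Finset.mem_erase, Finset.mem_filter, Finset.mem_Icc] at hn
    obtain ⟨hna, ⟨hn1, hn2⟩, hodd⟩ := hn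
    rw [hrecip n hodd, hJmod n, hexpmod (n * c)]
    have h := hexp n hodd
    push_cast
    push_cast at h
    linear_combination ((jacobiSym (n : ℤ) a : ℂ)) * h
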